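/- Let d ≥ 1, c > 0, C₀ > 0 and M > 0. Let f : ℝ^d → ℂ be twice continuously differentiable with all second-order partial derivatives bounded by M, and suppose |f(x)| ≤ C₀ e^{−c|x|} for all x ∈ ℝ^d. Then there exists C' > 0 (depending on d, c, C₀, M) such that for every j ∈ {1,…,d} and every x ∈ ℝ^d, |∂_{x_j} f(x)| ≤ C' e^{−c|x|/2}. -/

import Mathlib

theorem stmt12 (d : ℕ) (hd : 1 ≤ d) (c C₀ M : ℝ) (hc : 0 < c) (hC₀ : 0 < C₀) (hM : 0 < M)
    (f : EuclideanSpace ℝ (Fin d) → ℂ) (hf : ContDiff ℝ 2 f)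
    (hsecond : ∀ (x : EuclideanSpace ℝ (Fin d)) (i j : Fin d),
      ‖fderiv ℝ (fun y => fderiv ℝ f y (EuclideanSpace.single j 1)) x
          (EuclideanSpace.single i 1)‖ ≤ M)
    (hdecay : ∀ x : EuclideanSpace ℝ (Fin d), ‖f x‖ ≤ C₀ * Real.exp (-c * ‖x‖)) :
    ∃ C' : ℝ, 0 < C' ∧ ∀ (j : Fin d) (x : EuclideanSpace ℝ (Fin d)),
      ‖fderiv ℝ f x (EuclideanSpace.single j 1)‖ ≤ C' * Real.exp (-c * ‖x‖ / 2) := by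
  refine ⟨2 * C₀ * Real.exp c + M, by positivity, fun j x => ?_⟩
  set e : EuclideanSpace ℝ (Fin d) := EuclideanSpace.single j 1 with he
  have hne : ‖e‖ = 1 := by simp [he, EuclideanSpace.norm_single]
  set h : ℝ := Real.exp (-c * ‖x‖ / 2) with hh
  have hhpos : 0 < h := Real.exp_pos _
  have hh1 : h ≤ 1 := by
    rw [hh]
    apply Real.exp_le_one_iff.mpr
    have : 0 ≤ c * ‖x‖ := by positivity
    linarith
  have hhsq : h * h = Real.exp (-c * ‖x‖) := by
    rw [hh, ← Real.exp_add]; ring_nf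
  -- line map
  set L : ℝ → EuclideanSpace ℝ (Fin d) := fun t => x + t • e with hL
  have hLd : ∀ t : ℝ, HasDerivAt L e t := fun t => by
    simpa [hL] using ((hasDerivAt_id t).smul_const e).const_add x
  have hL0 : L 0 = x := by simp [hL]
  -- g
  set g : ℝ → ℂ := fun t => f (L t) with hg
  have hgd : ∀ t : ℝ, HasDerivAt g (fderiv ℝ f (L t) e) t := fun t =>
    ((hf.differentiable (by norm_num) (L t)).hasFDerivAt).comp_hasDerivAt t (hLd t)
  -- F and φ
  set F : EuclideanSpace ℝ (Fin d) → ℂ := fun y => fderiv ℝ f y e with hF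
  have hFc : ContDiff ℝ 1 F := by
    exact (hf.fderiv_right (by norm_num)).clm_apply contDiff_const
  set φ : ℝ → ℂ := fun t => F (L t) with hφ
  have hφd : ∀ t : ℝ, HasDerivAt φ (fderiv ℝ F (L t) e) t := fun t =>
    ((hFc.differentiable (by norm_num) (L t)).hasFDerivAt).comp_hasDerivAt t (hLd t)
  have hφbound : ∀ t : ℝ, ‖fderiv ℝ F (L t) e‖ ≤ M := fun t => hsecond (L t) j j
  -- φ is M-Lipschitz
  have hφlip : ∀ s t : ℝ, ‖φ t - φ s‖ ≤ M * ‖t - s‖ := by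
    intro s t
    exact (convex_univ).norm_image_sub_le_of_norm_hasDerivWithin_le
      (fun u _ => (hφd u).hasDerivWithinAt) (fun u _ => hφbound u)
      (Set.mem_univ s) (Set.mem_univ t)
  have hφ0 : φ 0 = fderiv ℝ f x e := by show F (L 0) = _; rw [hL0]
  -- G t = g t - t • φ 0
  set G : ℝ → ℂ := fun t => g t - t • φ 0 with hG
  have hGd : ∀ t : ℝ, HasDerivAt G (φ t - φ 0) t := by
    intro t
    have h1 : HasDerivAt (fun t : ℝ => t • φ 0) ((1:ℝ) • φ 0) t :=
      (hasDerivAt_id t).smul_const (φ 0)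
    have h2 := (hgd t).sub h1
    have : fderiv ℝ f (L t) e = φ t := by rw [hφ, hF]
    rw [this, one_smul] at h2
    exact h2
  have hGbound : ∀ t ∈ Set.Icc (0:ℝ) h, ‖φ t - φ 0‖ ≤ M * h := by
    intro t ht
    calc ‖φ t - φ 0‖ ≤ M * ‖t - 0‖ := hφlip 0 t
    _ ≤ M * h := by
        rw [sub_zero, Real.norm_eq_abs, abs_of_nonneg ht.1]
        exact mul_le_mul_of_nonneg_left ht.2 hM.le
  have key : ‖G h - G 0‖ ≤ M * h * ‖h - 0‖ :=
    (convex_Icc 0 h).norm_image_sub_le_of_norm_hasDerivWithin_le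
      (fun u _ => (hGd u).hasDerivWithinAt) hGbound
      (Set.left_mem_Icc.mpr hhpos.le) (Set.right_mem_Icc.mpr hhpos.le)
  have hGval : G h - G 0 = g h - g 0 - h • φ 0 := by
    simp only [hG, zero_smul, sub_zero, smul_eq_mul]
    ring
  -- norm bounds on g
  have hgx : ∀ t : ℝ, ‖g t‖ ≤ C₀ * Real.exp (-c * ‖L t‖) := by
    intro t
    simpa using hdecay (L t)
  have hg0 : ‖g 0‖ ≤ C₀ * Real.exp (-c * ‖x‖) := by
    have := hgx 0; rwa [hL0] at this
  have hgh : ‖g h‖ ≤ C₀ * Real.exp c * Real.exp (-c * ‖x‖) := by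
    have h1 : ‖x‖ - h ≤ ‖L h‖ := by
      have := norm_sub_norm_le x (L h)  -- not quite; use:
      have h2 : ‖x‖ ≤ ‖L h‖ + ‖h • e‖ := by
        calc ‖x‖ = ‖L h - h • e‖ := by simp [hL]
        _ ≤ ‖L h‖ + ‖h • e‖ := norm_sub_le _ _
      have h3 : ‖h • e‖ = h := by
        rw [norm_smul, hne, Real.norm_eq_abs, abs_of_nonneg hhpos.le, mul_one]
      linarith [h2, h3.le]
    calc ‖g h‖ ≤ C₀ * Real.exp (-c * ‖L h‖) := hgx h
    _ ≤ C₀ * Real.exp (-c * (‖x‖ - h)) := by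
        apply mul_le_mul_of_nonneg_left _ hC₀.le
        apply Real.exp_le_exp.mpr
        nlinarith
    _ = C₀ * (Real.exp (c * h) * Real.exp (-c * ‖x‖)) := by
        rw [← Real.exp_add]; ring_nf
    _ ≤ C₀ * Real.exp c * Real.exp (-c * ‖x‖) := by
        rw [mul_assoc]
        apply mul_le_mul_of_nonneg_left _ hC₀.le
        apply mul_le_mul_of_nonneg_right _ (Real.exp_pos _).le
        exact Real.exp_le_exp.mpr (by nlinarith)
  -- combine
  have hnorm : h * ‖φ 0‖ ≤ ‖g h‖ + ‖g 0‖ + M * h * h := by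
    have h1 : ‖h • φ 0‖ = h * ‖φ 0‖ := by
      rw [norm_smul, Real.norm_eq_abs, abs_of_nonneg hhpos.le]
    have h2 : h • φ 0 = (g h - g 0) - (G h - G 0) := by rw [hGval]; ring
    have h3 : ‖h • φ 0‖ ≤ ‖g h‖ + ‖g 0‖ + ‖G h - G 0‖ := by
      rw [h2]
      calc ‖(g h - g 0) - (G h - G 0)‖ ≤ ‖g h - g 0‖ + ‖G h - G 0‖ := norm_sub_le _ _
      _ ≤ ‖g h‖ + ‖g 0‖ + ‖G h - G 0‖ := by linarith [norm_sub_le (g h) (g 0)]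
    have h4 : ‖G h - G 0‖ ≤ M * h * h := by
      calc ‖G h - G 0‖ ≤ M * h * ‖h - 0‖ := key
      _ = M * h * h := by rw [sub_zero, Real.norm_eq_abs, abs_of_nonneg hhpos.le]
    rw [← h1]; linarith
  have hfinal : h * ‖φ 0‖ ≤ (2 * C₀ * Real.exp c + M) * h * h := by
    have hec : (1:ℝ) ≤ Real.exp c := Real.one_le_exp hc.le
    calc h * ‖φ 0‖ ≤ ‖g h‖ + ‖g 0‖ + M * h * h := hnorm
    _ ≤ C₀ * Real.exp c * (h*h) + C₀ * (h*h) + M * h * h := by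
        rw [← hhsq] at hg0 hgh; linarith
    _ ≤ (2 * C₀ * Real.exp c + M) * h * h := by nlinarith [mul_nonneg (mul_nonneg hC₀.le (sub_nonneg.mpr hec)) (mul_pos hhpos hhpos).le]
  have := (mul_le_mul_iff_right₀ hhpos).mp (by linarith [hfinal] : h * ‖φ 0‖ ≤ h * ((2 * C₀ * Real.exp c + M) * h))
  rw [hφ0] at this
  calc ‖fderiv ℝ f x e‖ ≤ (2 * C₀ * Real.exp c + M) * h := this
  _ = (2 * C₀ * Real.exp c + M) * Real.exp (-c * ‖x‖ / 2) := by rw [hh]
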